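/- arXiv:1008.1498 — 3 statements merged into one kernel-verified Lean document; each statement's English description precedes it below -/
import Mathlib

section
/- (Fuchs) Let D be an m×n real matrix, v ∈ ℝⁿ, and s = Dv, and suppose ||v||₀ is minimal among all solutions of Dw = s (i.e., ||v||₀ ≤ ||w||₀ for all w with Dw = s). Let S = supp(v), let D₀ be the submatrix of D consisting of the columns indexed by S, let D₁ consist of the remaining columns, and let v₀ be the vector of nonzero coordinates of v. If there exists a vector h ∈ ℝᵐ with D₀ᵀh = sgn(v₀) and ||D₁ᵀh||_∞ < 1, then ||v||₁ < ||w||₁ for every vector w ≠ v with Dw = s. -/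
open Matrix
open scoped Classical

/-- Number of nonzero entries of a vector (the ℓ₀ quasi-norm). -/
noncomputable def l0 {n : ℕ} (x : Fin n → ℝ) : ℕ :=
  Finset.card (Finset.univ.filter fun i => x i ≠ 0)

/-- (Fuchs) Let `s = D v` with `‖v‖₀` minimal among solutions of `D w = s`.
If there is a vector `h` with `D₀ᵀ h = sgn v₀` (on the support of `v`) and
`‖D₁ᵀ h‖_∞ < 1` (off the support of `v`), then `v` is the unique
`ℓ₁`-minimizer among solutions of `D w = s`. -/
theorem fuchs_l1_recovery (m n : ℕ) (D : Matrix (Fin m) (Fin n) ℝ)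
    (v : Fin n → ℝ) (s : Fin m → ℝ) (hs : s = D.mulVec v)
    (hmin : ∀ w : Fin n → ℝ, D.mulVec w = s → l0 v ≤ l0 w)
    (h : Fin m → ℝ)
    (hsupp : ∀ j : Fin n, v j ≠ 0 → Dᵀ.mulVec h j = Real.sign (v j))
    (hoff : ∀ j : Fin n, v j = 0 → |Dᵀ.mulVec h j| < 1) :
    ∀ w : Fin n → ℝ, D.mulVec w = s → w ≠ v →
      ∑ j, |v j| < ∑ j, |w j| := by
  intro w hw hne
  set c : Fin n → ℝ := Dᵀ.mulVec h with hc
  have hsign : ∀ x : ℝ, Real.sign x * x = |x| := by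
    intro x
    rcases lt_trichotomy x 0 with hx | hx | hx
    · rw [Real.sign_of_neg hx, abs_of_neg hx]; ring
    · simp [hx]
    · rw [Real.sign_of_pos hx, abs_of_pos hx]; ring
  have hcle : ∀ j, |c j| ≤ 1 := by
    intro j
    by_cases hv : v j = 0
    · exact (hoff j hv).le
    · rw [hsupp j hv]
      rcases lt_trichotomy (v j) 0 with hx | hx | hx
      · rw [Real.sign_of_neg hx]; norm_num
      · exact absurd hx hv
      · rw [Real.sign_of_pos hx]; norm_num
  have hv1 : ∑ j, c j * v j = ∑ j, |v j| := by
    apply Finset.sum_congr rfl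
    intro j _
    by_cases hv : v j = 0
    · simp [hv]
    · have : c j = Real.sign (v j) := hsupp j hv
      rw [this, hsign]
  have hdot : ∀ u : Fin n → ℝ, h ⬝ᵥ D.mulVec u = ∑ j, c j * u j := by
    intro u
    simp only [dotProduct, Matrix.mulVec, hc, Matrix.transpose_apply,
      Finset.mul_sum, Finset.sum_mul]
    rw [Finset.sum_comm]
    apply Finset.sum_congr rfl
    intro j _
    apply Finset.sum_congr rfl
    intro i _
    ring
  have hdw : ∑ j, c j * w j = ∑ j, |v j| := by
    rw [← hv1, ← hdot, ← hdot, hw, hs]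
  by_cases hcase : ∃ j, v j = 0 ∧ w j ≠ 0
  · obtain ⟨j0, hv0, hw0⟩ := hcase
    rw [← hdw]
    apply Finset.sum_lt_sum
    · intro j _
      calc c j * w j ≤ |c j * w j| := le_abs_self _
        _ = |c j| * |w j| := abs_mul _ _
        _ ≤ 1 * |w j| := by
            exact mul_le_mul_of_nonneg_right (hcle j) (abs_nonneg _)
        _ = |w j| := one_mul _
    · refine ⟨j0, Finset.mem_univ _, ?_⟩
      calc c j0 * w j0 ≤ |c j0| * |w j0| := by rw [← abs_mul]; exact le_abs_self _
        _ < 1 * |w j0| := by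
            exact mul_lt_mul_of_pos_right (hoff j0 hv0) (abs_pos.mpr hw0)
        _ = |w j0| := one_mul _
  · push_neg at hcase
    exfalso
    apply hne
    -- show w = v using l0 minimality
    by_contra hne'
    have hu : ∃ j0, w j0 - v j0 ≠ 0 := by
      by_contra hall
      push_neg at hall
      apply hne'
      funext j
      have := hall j
      linarith [hall j]
    obtain ⟨j0, hj0⟩ := hu
    have hvj0 : v j0 ≠ 0 := by
      intro hv0
      exact hj0 (by rw [hcase j0 hv0, hv0, sub_zero])
    set t : ℝ := -(v j0) / (w j0 - v j0) with ht
    set w' : Fin n → ℝ := fun j => v j + t * (w j - v j) with hw'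
    have hDu : D.mulVec (fun j => w j - v j) = 0 := by
      have : D.mulVec w - D.mulVec v = 0 := by rw [hw, hs]; simp
      rw [← this, ← Matrix.mulVec_sub]
      rfl
    have hDw' : D.mulVec w' = s := by
      have : w' = v + t • (fun j => w j - v j) := by
        funext j; simp [hw', smul_eq_mul]
      rw [this, Matrix.mulVec_add, Matrix.mulVec_smul, hDu, hs]
      simp
    have hw'j0 : w' j0 = 0 := by
      simp only [hw', ht]
      field_simp
      ring
    have hsub : (Finset.univ.filter fun i => w' i ≠ 0) ⊂
        (Finset.univ.filter fun i => v i ≠ 0) := by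
      constructor
      · intro j hj
        simp only [Finset.mem_filter, Finset.mem_univ, true_and] at hj ⊢
        intro hv0
        apply hj
        simp [hw', hcase j hv0, hv0]
      · intro hsub'
        have hj0mem : j0 ∈ (Finset.univ.filter fun i => v i ≠ 0) := by
          simp [hvj0]
        have := hsub' hj0mem
        simp only [Finset.mem_filter, Finset.mem_univ, true_and] at this
        exact this hw'j0
    have hlt : l0 w' < l0 v := Finset.card_lt_card hsub
    exact absurd (hmin w' hDw') (not_le.mpr hlt)
end

section
/- Let A be an m×n real matrix, y ∈ ℝᵐ, and suppose x ∈ ℝⁿ minimizes ||y − Ax'||₀ over all x' ∈ ℝⁿ. Let v = y − Ax, let S = supp(v) ⊆ {1,…,m}, let A₀ = A(S,:) be the rows of A indexed by S and A₁ = A(Sᶜ,:) the remaining rows, and let v₀ be the restriction of v to S. If there exists a vector u with ||u||_∞ < 1 and A₁ᵀu = −A₀ᵀ sgn(v₀), then for every x' ∈ ℝⁿ with Ax' ≠ Ax one has ||y − Ax||₁ < ||y − Ax'||₁. -/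
open Matrix
open scoped Classical

/-- Suppose `x` minimizes `‖y - A x'‖₀`, let `v = y - A x` with support `S`,
and split the rows of `A` into `A₀ = A(S,:)` and `A₁ = A(Sᶜ,:)`. If there is
a vector `u` with `‖u‖_∞ < 1` and `A₁ᵀ u = -A₀ᵀ sgn(v₀)`, then `Ax` is the
unique `ℓ₁`-minimizer: `‖y - A x‖₁ < ‖y - A x'‖₁` whenever `A x' ≠ A x`. -/
theorem min_unsatisfy_l1_recovery (m n : ℕ) (A : Matrix (Fin m) (Fin n) ℝ)
    (y : Fin m → ℝ) (x : Fin n → ℝ)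
    (hmin : ∀ x' : Fin n → ℝ, l0 (y - A.mulVec x) ≤ l0 (y - A.mulVec x'))
    (v : Fin m → ℝ) (hv : v = y - A.mulVec x)
    (u : {i : Fin m // v i = 0} → ℝ) (hu : ∀ i, |u i| < 1)
    (heq : ∀ j : Fin n,
      ∑ i : {i : Fin m // v i = 0}, A i j * u i =
        - ∑ i : {i : Fin m // v i ≠ 0}, A i j * Real.sign (v i)) :
    ∀ x' : Fin n → ℝ, A.mulVec x' ≠ A.mulVec x →
      ∑ i, |(y - A.mulVec x) i| < ∑ i, |(y - A.mulVec x') i| := by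
  intro x' hx'
  set w : Fin m → ℝ := A.mulVec x' - A.mulVec x with hw
  have hwne : w ≠ 0 := sub_ne_zero.mpr hx'
  -- Step 1: there is an index off the support of v where w is nonzero.
  have hex : ∃ i, v i = 0 ∧ w i ≠ 0 := by
    by_contra hcon
    push_neg at hcon
    obtain ⟨i0, hi0⟩ : ∃ i, w i ≠ 0 := by
      by_contra h'; push_neg at h'; exact hwne (funext h')
    have hvi0 : v i0 ≠ 0 := fun hz => hi0 (hcon i0 hz)
    set t : ℝ := v i0 / w i0 with ht
    set x'' : Fin n → ℝ := x + t • (x' - x) with hx''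
    have hAx'' : y - A.mulVec x'' = fun i => v i - t * w i := by
      funext i
      simp only [hx'', Matrix.mulVec_add, Matrix.mulVec_smul, Matrix.mulVec_sub, hv, hw,
        Pi.sub_apply, Pi.add_apply, Pi.smul_apply, smul_eq_mul]
      ring
    have hsub : (Finset.univ.filter fun i => (v i - t * w i) ≠ 0) ⊂
        (Finset.univ.filter fun i => v i ≠ 0) := by
      rw [Finset.ssubset_iff_of_subset]
      · refine ⟨i0, by simp [hvi0], ?_⟩
        simp only [Finset.mem_filter, Finset.mem_univ, true_and, not_not]
        rw [ht, div_mul_cancel₀ _ hi0, sub_self]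
      · intro i hi
        simp only [Finset.mem_filter, Finset.mem_univ, true_and] at hi ⊢
        intro hz
        exact hi (by rw [hz, hcon i hz]; ring)
    have hcard := Finset.card_lt_card hsub
    have := hmin x''
    rw [hAx'', ← hv] at this
    simp only [l0] at this hcard
    omega
  -- Step 2: the dual certificate vector c.
  set c : Fin m → ℝ := fun i => if h : v i = 0 then u ⟨i, h⟩ else Real.sign (v i) with hc
  have hsign_le : ∀ s : ℝ, |Real.sign s| ≤ 1 := by
    intro s
    rcases lt_trichotomy s 0 with h | h | h
    · simp [Real.sign_of_neg h]
    · simp [h]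
    · simp [Real.sign_of_pos h]
  have hc1 : ∀ i, |c i| ≤ 1 := by
    intro i
    by_cases h : v i = 0
    · simp only [hc, dif_pos h]; exact (hu _).le
    · simp only [hc, dif_neg h]; exact hsign_le _
  have hcv : ∀ i, c i * v i = |v i| := by
    intro i
    by_cases h : v i = 0
    · simp [h]
    · simp only [hc, dif_neg h]
      rcases lt_trichotomy (v i) 0 with h' | h' | h'
      · rw [Real.sign_of_neg h', abs_of_neg h']; ring
      · exact absurd h' h
      · rw [Real.sign_of_pos h', abs_of_pos h']; ring
  -- Step 3: ∑ c i * A i j = 0 for each column j.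
  have hzero : ∀ j, ∑ i, c i * A i j = 0 := by
    intro j
    rw [← Finset.sum_filter_add_sum_filter_not Finset.univ (fun i => v i = 0)
      (fun i => c i * A i j)]
    have h1 : ∑ i ∈ Finset.univ.filter (fun i => v i = 0), c i * A i j
        = ∑ i : {i : Fin m // v i = 0}, A i j * u i := by
      rw [Finset.sum_subtype (p := fun i => v i = 0) (Finset.univ.filter (fun i => v i = 0))
        (by simp) (fun i => c i * A i j)]
      refine Finset.sum_congr rfl ?_
      rintro ⟨i, hi⟩ _
      simp only [hc, dif_pos hi]; ring
    have h2 : ∑ i ∈ Finset.univ.filter (fun i => ¬ v i = 0), c i * A i j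
        = ∑ i : {i : Fin m // v i ≠ 0}, A i j * Real.sign (v i) := by
      rw [Finset.sum_subtype (p := fun i => v i ≠ 0) (Finset.univ.filter (fun i => ¬ v i = 0))
        (by simp) (fun i => c i * A i j)]
      refine Finset.sum_congr rfl ?_
      rintro ⟨i, hi⟩ _
      simp only [hc, dif_neg hi]; ring
    rw [h1, h2, heq j]; ring
  -- Step 4: ∑ c i * w i = 0.
  have hcw : ∑ i, c i * w i = 0 := by
    have hwexp : ∀ i, w i = ∑ j, A i j * (x' j - x j) := by
      intro i
      simp [hw, Matrix.mulVec, dotProduct, mul_sub, Finset.sum_sub_distrib]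
    calc ∑ i, c i * w i = ∑ i, ∑ j, c i * (A i j * (x' j - x j)) := by
          refine Finset.sum_congr rfl fun i _ => ?_
          rw [hwexp i, Finset.mul_sum]
      _ = ∑ j, ∑ i, c i * (A i j * (x' j - x j)) := Finset.sum_comm
      _ = ∑ j, (∑ i, c i * A i j) * (x' j - x j) := by
          refine Finset.sum_congr rfl fun j _ => ?_
          rw [Finset.sum_mul]
          exact Finset.sum_congr rfl fun i _ => (mul_assoc _ _ _).symm
      _ = 0 := by simp [hzero]
  -- Step 5: conclude.
  have hv' : ∀ i, (y - A.mulVec x') i = v i - w i := by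
    intro i; simp [hv, hw]
  have hlt : ∑ i, c i * (v i - w i) < ∑ i, |v i - w i| := by
    obtain ⟨i0, hvi0, hwi0⟩ := hex
    refine Finset.sum_lt_sum (fun i _ => ?_) ⟨i0, Finset.mem_univ _, ?_⟩
    · calc c i * (v i - w i) ≤ |c i * (v i - w i)| := le_abs_self _
        _ = |c i| * |v i - w i| := abs_mul _ _
        _ ≤ 1 * |v i - w i| := by
            exact mul_le_mul_of_nonneg_right (hc1 i) (abs_nonneg _)
        _ = |v i - w i| := one_mul _
    · have hne : v i0 - w i0 ≠ 0 := by rw [hvi0]; simpa using hwi0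
      calc c i0 * (v i0 - w i0) ≤ |c i0| * |v i0 - w i0| := by
            rw [← abs_mul]; exact le_abs_self _
        _ < 1 * |v i0 - w i0| := by
            exact mul_lt_mul_of_pos_right (by
              simp only [hc, dif_pos hvi0]; exact hu _) (abs_pos.mpr hne)
        _ = |v i0 - w i0| := one_mul _
  have hsum : ∑ i, c i * (v i - w i) = ∑ i, |v i| := by
    simp only [mul_sub]
    rw [Finset.sum_sub_distrib, hcw, sub_zero]
    exact Finset.sum_congr rfl fun i _ => hcv i
  calc ∑ i, |(y - A.mulVec x) i| = ∑ i, |v i| := by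
        refine Finset.sum_congr rfl fun i _ => ?_; rw [hv]
    _ = ∑ i, c i * (v i - w i) := hsum.symm
    _ < ∑ i, |v i - w i| := hlt
    _ = ∑ i, |(y - A.mulVec x') i| := by
        refine Finset.sum_congr rfl fun i _ => ?_; rw [hv' i]
end

section
/- Let A be an m×n real matrix, y ∈ ℝᵐ, and suppose x ∈ ℝⁿ minimizes ||y − Ax'||₀ over all x' ∈ ℝⁿ. Let v = y − Ax, let S = supp(v), let A₀ = A(S,:) be the rows of A indexed by S and A₁ = A(Sᶜ,:) the remaining rows, and let v₀ be the restriction of v to S. Suppose that: (i) the rows of A₁ are linearly independent (equivalently A₁A₁ᵀ is invertible); (ii) the row span of A₀ is contained in the row span of A₁; and (iii) the matrix M = (A₁A₁ᵀ)⁻¹A₁A₀ᵀ (that is, (A₁ᵀ)⁺A₀ᵀ, where (A₁ᵀ)⁺ denotes the pseudoinverse of A₁ᵀ) satisfies ||M||_{∞→∞} < 1, where ||M||_{∞→∞} is the maximum over rows of M of the sum of absolute values of the entries in that row. Then for every x' ∈ ℝⁿ with Ax' ≠ Ax one has ||y − Ax||₁ < ||y − Ax'||₁. -/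
open Matrix
open scoped Classical

/-- Suppose `x` minimizes `‖y - A x'‖₀`, let `v = y - A x` with support `S`,
and split the rows of `A` into `A₀ = A(S,:)` and `A₁ = A(Sᶜ,:)`.  If the rows
of `A₁` are linearly independent (equivalently `A₁ A₁ᵀ` is invertible), the
row span of `A₀` is contained in the row span of `A₁`, and the matrix
`M = (A₁ A₁ᵀ)⁻¹ A₁ A₀ᵀ = (A₁ᵀ)⁺ A₀ᵀ` has `‖M‖_{∞→∞} < 1` (every row of `M`
has absolute row sum `< 1`), then `‖y - A x‖₁ < ‖y - A x'‖₁` for every `x'`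
with `A x' ≠ A x`. -/
theorem min_unsatisfy_l1_pseudoinverse_condition (m n : ℕ)
    (A : Matrix (Fin m) (Fin n) ℝ) (y : Fin m → ℝ) (x : Fin n → ℝ)
    (hmin : ∀ x' : Fin n → ℝ, l0 (y - A.mulVec x) ≤ l0 (y - A.mulVec x'))
    (v : Fin m → ℝ) (hv : v = y - A.mulVec x)
    (A₀ : Matrix {i : Fin m // v i ≠ 0} (Fin n) ℝ)
    (hA₀ : A₀ = A.submatrix (Subtype.val : {i : Fin m // v i ≠ 0} → Fin m) id)
    (A₁ : Matrix {i : Fin m // v i = 0} (Fin n) ℝ)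
    (hA₁ : A₁ = A.submatrix (Subtype.val : {i : Fin m // v i = 0} → Fin m) id)
    (hindep : LinearIndependent ℝ (fun i : {i : Fin m // v i = 0} => fun j => A₁ i j))
    (hinv : IsUnit (A₁ * A₁ᵀ).det)
    (hrowspan : Submodule.span ℝ
        (Set.range fun i : {i : Fin m // v i ≠ 0} => fun j => A₀ i j) ≤
      Submodule.span ℝ
        (Set.range fun i : {i : Fin m // v i = 0} => fun j => A₁ i j))
    (M : Matrix {i : Fin m // v i = 0} {i : Fin m // v i ≠ 0} ℝ)
    (hM : M = (A₁ * A₁ᵀ)⁻¹ * A₁ * A₀ᵀ)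
    (hnorm : ∀ r : {i : Fin m // v i = 0}, ∑ s : {i : Fin m // v i ≠ 0}, |M r s| < 1) :
    ∀ x' : Fin n → ℝ, A.mulVec x' ≠ A.mulVec x →
      ∑ i, |(y - A.mulVec x) i| < ∑ i, |(y - A.mulVec x') i| := by
  intro x' hx'
  -- construct C with A₀ = C * A₁
  have hex : ∀ s : {i : Fin m // v i ≠ 0}, ∃ c : {i : Fin m // v i = 0} → ℝ,
      ∑ r, c r • (fun j => A₁ r j) = fun j => A₀ s j := by
    intro s
    have : (fun j => A₀ s j) ∈ Submodule.span ℝ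
        (Set.range fun i : {i : Fin m // v i = 0} => fun j => A₁ i j) :=
      hrowspan (Submodule.subset_span ⟨s, rfl⟩)
    obtain ⟨c, hc⟩ := (Finsupp.mem_span_range_iff_exists_finsupp
      (v := fun i : {i : Fin m // v i = 0} => fun j => A₁ i j)).mp this
    refine ⟨c, ?_⟩
    rw [← hc, Finsupp.sum_fintype]
    exact fun _ => zero_smul ℝ _
  choose C hC using hex
  have hCA : A₀ = Matrix.of C * A₁ := by
    ext s j
    have := congrFun (hC s) j
    simpa [Matrix.mul_apply, Finset.sum_apply] using this.symm
  have hMC : M = (Matrix.of C)ᵀ := by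
    rw [hM, hCA, Matrix.transpose_mul, ← Matrix.mul_assoc, Matrix.mul_assoc ((A₁*A₁ᵀ)⁻¹),
      Matrix.nonsing_inv_mul _ hinv, Matrix.one_mul]
  set u : Fin n → ℝ := x' - x with hu
  set w : Fin m → ℝ := A.mulVec u with hw
  have hwsub : w = A.mulVec x' - A.mulVec x := by
    rw [hw, hu, mulVec_sub]
  have hwne : w ≠ 0 := by
    rw [hwsub]; exact sub_ne_zero.mpr hx'
  set a : {i : Fin m // v i = 0} → ℝ := fun r => w r.val with ha
  set b : {i : Fin m // v i ≠ 0} → ℝ := fun s => w s.val with hb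
  have haA : ∀ r, a r = A₁.mulVec u r := by
    intro r; simp [ha, hw, hA₁, Matrix.mulVec, dotProduct, Matrix.submatrix]
  have hbA : ∀ s, b s = A₀.mulVec u s := by
    intro s; simp [hb, hw, hA₀, Matrix.mulVec, dotProduct, Matrix.submatrix]
  have hbC : ∀ s, b s = ∑ r, M r s * a r := by
    intro s
    rw [hbA, hCA, ← Matrix.mulVec_mulVec]
    simp only [Matrix.mulVec, dotProduct, Matrix.of_apply]
    refine Finset.sum_congr rfl fun r _ => ?_
    rw [hMC, haA]
    rfl
  have hane : a ≠ 0 := by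
    intro h0
    apply hwne
    funext i
    by_cases hvi : v i = 0
    · exact congrFun h0 ⟨i, hvi⟩
    · have := hbC ⟨i, hvi⟩
      simpa [h0, hb] using this
  -- key inequality : ∑ |b| < ∑ |a|
  have key : ∑ s, |b s| < ∑ r, |a r| := by
    have h1 : ∑ s, |b s| ≤ ∑ r, (∑ s, |M r s|) * |a r| := by
      calc ∑ s, |b s| ≤ ∑ s, ∑ r, |M r s| * |a r| := by
            refine Finset.sum_le_sum fun s _ => ?_
            rw [hbC]
            exact (Finset.abs_sum_le_sum_abs _ _).trans (le_of_eq (by simp [abs_mul]))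
        _ = ∑ r, (∑ s, |M r s|) * |a r| := by
            rw [Finset.sum_comm]
            simp [Finset.sum_mul]
    refine h1.trans_lt ?_
    obtain ⟨r0, hr0⟩ : ∃ r, a r ≠ 0 := by
      by_contra h; push_neg at h; exact hane (funext h)
    have : ∑ r, (∑ s, |M r s|) * |a r| < ∑ r, 1 * |a r| := by
      refine Finset.sum_lt_sum (fun r _ => ?_) ⟨r0, Finset.mem_univ r0, ?_⟩
      · exact mul_le_mul_of_nonneg_right (hnorm r).le (abs_nonneg _)
      · exact mul_lt_mul_of_pos_right (hnorm r0) (abs_pos.mpr hr0)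
    simpa using this
  have hsplit : ∀ f : Fin m → ℝ, ∑ i, f i =
      (∑ r : {i : Fin m // v i = 0}, f r.val) + ∑ s : {i : Fin m // v i ≠ 0}, f s.val := by
    intro f
    exact (Fintype.sum_subtype_add_sum_subtype (fun i => v i = 0) f).symm
  have hy' : ∀ i, (y - A.mulVec x') i = v i - w i := by
    intro i; rw [hwsub, hv]; simp
  have hy : ∀ i, (y - A.mulVec x) i = v i := by intro i; rw [hv]
  have hL : ∑ i, |(y - A.mulVec x) i| = ∑ s : {i : Fin m // v i ≠ 0}, |v s.val| := by
    rw [hsplit]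
    rw [Finset.sum_eq_zero (fun r _ => by rw [hy]; simp [r.prop])]
    simp only [hy, zero_add]
  have hR : ∑ i, |(y - A.mulVec x') i| =
      (∑ r : {i : Fin m // v i = 0}, |a r|) + ∑ s : {i : Fin m // v i ≠ 0}, |v s.val - b s| := by
    rw [hsplit]
    congr 1
    · refine Finset.sum_congr rfl fun r _ => ?_
      rw [hy' r.val, r.prop, ha]
      simp
    · exact Finset.sum_congr rfl fun s _ => by rw [hy' s.val]
  rw [hL, hR]
  have h3 : ∑ s : {i : Fin m // v i ≠ 0}, |v s.val| - ∑ s, |b s| ≤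
      ∑ s : {i : Fin m // v i ≠ 0}, |v s.val - b s| := by
    rw [← Finset.sum_sub_distrib]
    exact Finset.sum_le_sum fun s _ => abs_sub_abs_le_abs_sub _ _
  linarith
end
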